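/- Let K be a field of characteristic 2 that is quadratically non-extendable, i.e., every quadratic polynomial over K has a root in K. Consider the list of algebras: S(0,1,1,0,1,1); S(0,1,1,0,1,0); S(0,1,1,1,1,0); and S(0, t²/(1+t²), t/(1+t²), 1, t/(1+t²), 1) for t ∈ K* with t ≠ 1. Then: (1) every endo-commutative algebra S(0,q,a,b,c,d) over K with a ≠ 0 and c ≠ 0 is isomorphic to at least one algebra in this list; (2) any two algebras in the list with distinct parameter tuples are non-isomorphic. -/

import Mathlib

/-- Multiplication of the 2-dimensional algebra `S(p,q,a,b,c,d)` on `K × K`,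
with basis `e = (1,0)`, `f = (0,1)` and table
`e*e = f`, `f*f = p•e + q•f`, `e*f = a•e + b•f`, `f*e = c•e + d•f`. -/
def mulS {K : Type*} [Field K] (p q a b c d : K) (u v : K × K) : K × K :=
  (u.1 * v.2 * a + u.2 * v.1 * c + u.2 * v.2 * p,
   u.1 * v.1 + u.1 * v.2 * b + u.2 * v.1 * d + u.2 * v.2 * q)

/-- `S(p,q,a,b,c,d)` is endo-commutative: `(x*x)*(y*y) = (x*y)*(x*y)`. -/
def EndoComm {K : Type*} [Field K] (p q a b c d : K) : Prop :=
  ∀ u v : K × K,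
    mulS p q a b c d (mulS p q a b c d u u) (mulS p q a b c d v v) =
      mulS p q a b c d (mulS p q a b c d u v) (mulS p q a b c d u v)

/-- `S(p,q,a,b,c,d)` and `S(p',q',a',b',c',d')` are isomorphic: there is a bijective
`K`-linear map between them preserving multiplication. -/
def IsoS {K : Type*} [Field K] (p q a b c d p' q' a' b' c' d' : K) : Prop :=
  ∃ φ : (K × K) ≃ₗ[K] (K × K),
    ∀ u v : K × K,
      φ (mulS p q a b c d u v) = mulS p' q' a' b' c' d' (φ u) (φ v)

/-- The parameter tuples appearing in the classification list over a
quadratically non-extendable field of characteristic 2. -/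
def InListQNE {K : Type*} [Field K] (p q a b c d : K) : Prop :=
  (p, q, a, b, c, d) = ((0 : K), 1, 1, 0, 1, 1) ∨
  (p, q, a, b, c, d) = ((0 : K), 1, 1, 0, 1, 0) ∨
  (p, q, a, b, c, d) = ((0 : K), 1, 1, 1, 1, 0) ∨
  (∃ t : K, t ≠ 0 ∧ t ≠ 1 ∧
      (p, q, a, b, c, d) =
        ((0 : K), t ^ 2 / (1 + t ^ 2), t / (1 + t ^ 2), 1, t / (1 + t ^ 2), 1))

section AuxClassification

variable {K : Type*} [Field K]

def lmS (α β γ δ : K) : (K × K) →ₗ[K] (K × K) where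
  toFun x := (x.1 * α + x.2 * γ, x.1 * β + x.2 * δ)
  map_add' x y := by simp [Prod.ext_iff]; constructor <;> ring
  map_smul' c x := by simp [Prod.ext_iff, smul_eq_mul]; constructor <;> ring

def leqS (α β γ δ : K) (h : α * δ - β * γ ≠ 0) : (K × K) ≃ₗ[K] (K × K) :=
  LinearEquiv.ofLinear (lmS α β γ δ)
    (lmS (δ / (α * δ - β * γ)) (-β / (α * δ - β * γ))
      (-γ / (α * δ - β * γ)) (α / (α * δ - β * γ)))
    (by refine LinearMap.ext fun x => ?_
        simp [lmS, Prod.ext_iff]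
        have h' : α * δ - γ * β ≠ 0 := by rwa [mul_comm γ β]
        have h'' : -(β * γ) + δ * α ≠ 0 := by rwa [neg_add_eq_sub, mul_comm δ α]
        constructor
        · linear_combination x.1 * mul_inv_cancel₀ h'
        · linear_combination x.2 * mul_inv_cancel₀ h'')
    (by refine LinearMap.ext fun x => ?_
        simp [lmS, Prod.ext_iff]
        have h' : α * δ - γ * β ≠ 0 := by rwa [mul_comm γ β]
        constructor
        · linear_combination x.1 * mul_inv_cancel₀ h'
        · linear_combination x.2 * mul_inv_cancel₀ h')

lemma leqS_apply (α β γ δ : K) (h : α * δ - β * γ ≠ 0) (x : K × K) :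
    leqS α β γ δ h x = (x.1 * α + x.2 * γ, x.1 * β + x.2 * δ) := rfl

lemma mkIso (p q a b c d p' q' a' b' c' d' α β γ δ : K)
    (hdet : α * δ - β * γ ≠ 0)
    (h1a : α * β * a' + β * α * c' + β * β * p' = γ)
    (h1b : α * α + α * β * b' + β * α * d' + β * β * q' = δ)
    (h2a : a * α + b * γ = α * δ * a' + β * γ * c' + β * δ * p')
    (h2b : a * β + b * δ = α * γ + α * δ * b' + β * γ * d' + β * δ * q')
    (h3a : c * α + d * γ = γ * β * a' + δ * α * c' + δ * β * p')
    (h3b : c * β + d * δ = γ * α + γ * β * b' + δ * α * d' + δ * β * q')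
    (h4a : p * α + q * γ = γ * δ * a' + δ * γ * c' + δ * δ * p')
    (h4b : p * β + q * δ = γ * γ + γ * δ * b' + δ * γ * d' + δ * δ * q') :
    IsoS p q a b c d p' q' a' b' c' d' := by
  refine ⟨leqS α β γ δ hdet, fun u v => ?_⟩
  rw [leqS_apply, leqS_apply, leqS_apply]
  simp only [mulS, Prod.ext_iff]
  constructor
  · linear_combination -(u.1 * v.1) * h1a + u.1 * v.2 * h2a + u.2 * v.1 * h3a + u.2 * v.2 * h4a
  · linear_combination -(u.1 * v.1) * h1b + u.1 * v.2 * h2b + u.2 * v.1 * h3b + u.2 * v.2 * h4b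

lemma IsoS_symm {p q a b c d p' q' a' b' c' d' : K}
    (h : IsoS p q a b c d p' q' a' b' c' d') :
    IsoS p' q' a' b' c' d' p q a b c d := by
  obtain ⟨φ, hφ⟩ := h
  refine ⟨φ.symm, fun u v => φ.injective ?_⟩
  rw [φ.apply_symm_apply, hφ, φ.apply_symm_apply, φ.apply_symm_apply]


variable {K : Type*} [Field K]

lemma sne [CharP K 2] (t : K) (ht1 : t ≠ 1) : 1 + t ^ 2 ≠ 0 := by
  have h2 : (2 : K) = 0 := by exact_mod_cast CharP.cast_eq_zero K 2
  intro h0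
  have hsq : (1 + t) ^ 2 = 0 := by linear_combination h0 + t * h2
  have h1t : 1 + t = 0 := by
    exact pow_eq_zero_iff (n := 2) (by norm_num) |>.mp hsq
  exact ht1 (by linear_combination h1t - h2)

lemma part1 [CharP K 2]
    (hquad : ∀ a b c : K, a ≠ 0 → ∃ x : K, a * x ^ 2 + b * x + c = 0) :
    ∀ q a b c d : K, a ≠ 0 → c ≠ 0 → EndoComm 0 q a b c d →
        ∃ p' q' a' b' c' d' : K, InListQNE p' q' a' b' c' d' ∧
          IsoS 0 q a b c d p' q' a' b' c' d' := by
  have h2 : (2 : K) = 0 := by exact_mod_cast CharP.cast_eq_zero K 2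
  intro q a b c d ha hc hec
  have E1 := hec (1, 0) (0, 1)
  have E2 := hec (0, 1) (1, 0)
  have E3 := hec (1, 1) (1, 0)
  simp only [mulS, Prod.mk.injEq] at E1 E2 E3
  obtain ⟨E1a, E1b⟩ := E1
  obtain ⟨E2a, E2b⟩ := E2
  obtain ⟨E3a, E3b⟩ := E3
  -- c = a
  have hac : c = a := by
    have hsq : (a + c) ^ 2 = 0 := by
      linear_combination E3a - E2a + (a * c + c ^ 2) * h2
    have hs0 : a + c = 0 := pow_eq_zero_iff (n := 2) (by norm_num) |>.mp hsq
    linear_combination hs0 - a * h2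
  simp only [hac] at hc E1b E2b E3b ⊢
  have hainv : a * a⁻¹ = 1 := mul_inv_cancel₀ ha
  by_cases hbd : b = d
  · -- commutative case
    subst hbd
    have hrel : q ^ 2 - a ^ 2 - b ^ 2 * q = 0 := by
      linear_combination E1b + (a * b ^ 2) * h2
    by_cases hb0 : b = 0
    · -- S(0,a,a,0,a,0) ≅ A2
      subst hb0
      have hqa : a = q := by
        have hsq : (q + a) ^ 2 = 0 := by
          linear_combination hrel + (a ^ 2 + a * q) * h2
        have hs0 : q + a = 0 := pow_eq_zero_iff (n := 2) (by norm_num) |>.mp hsq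
        linear_combination hs0 - q * h2
      subst hqa
      obtain ⟨r, hr⟩ := hquad 1 0 (-a⁻¹) one_ne_zero
      have hr2 : r ^ 2 * a = 1 := by
        have hra : r ^ 2 = a⁻¹ := by linear_combination hr
        rw [hra]; exact inv_mul_cancel₀ ha
      have hr0 : r ≠ 0 := by
        intro h0; rw [h0] at hr2; simp at hr2
      refine ⟨0, 1, 1, 0, 1, 0, Or.inr (Or.inl rfl), IsoS_symm ?_⟩
      refine mkIso 0 1 1 0 1 0 0 a a 0 a 0 r 0 0 (r ^ 2)
        (by simpa using mul_ne_zero hr0 (pow_ne_zero 2 hr0)) ?_ ?_ ?_ ?_ ?_ ?_ ?_ ?_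
      · ring
      · ring
      · linear_combination -r * hr2
      · ring
      · linear_combination -r * hr2
      · ring
      · ring
      · linear_combination -(r ^ 2) * hr2
    · -- family case
      have hbinv : b * b⁻¹ = 1 := mul_inv_cancel₀ hb0
      have hq0 : q ≠ 0 := by
        intro h0
        rw [h0] at hrel
        have : a ^ 2 = 0 := by linear_combination -hrel
        exact ha (pow_eq_zero_iff (n := 2) (by norm_num) |>.mp this)
      have hqa : q ≠ a := by
        intro h0
        rw [h0] at hrel
        have : a * b ^ 2 = 0 := by linear_combination -hrel
        rcases mul_eq_zero.mp this with h | h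
        · exact ha h
        · exact hb0 (pow_eq_zero_iff (n := 2) (by norm_num) |>.mp h)
      have ht0 : q / a ≠ 0 := div_ne_zero hq0 ha
      have ht1 : q / a ≠ 1 := by
        intro h0
        apply hqa
        field_simp at h0
        exact h0
      have hs := sne (K := K) (q / a) ht1
      have hA : q / a / (1 + (q / a) ^ 2) = a * b⁻¹ ^ 2 := by
        rw [div_eq_iff hs]
        field_simp
        linear_combination -hrel - a ^ 2 * h2
      have hQ : (q / a) ^ 2 / (1 + (q / a) ^ 2) = q * b⁻¹ ^ 2 := by
        rw [div_eq_iff hs]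
        field_simp
        linear_combination -hrel - a ^ 2 * h2
      refine ⟨0, (q/a)^2/(1+(q/a)^2), (q/a)/(1+(q/a)^2), 1, (q/a)/(1+(q/a)^2), 1,
        Or.inr (Or.inr (Or.inr ⟨q/a, ht0, ht1, rfl⟩)), IsoS_symm ?_⟩
      refine mkIso 0 ((q/a)^2/(1+(q/a)^2)) ((q/a)/(1+(q/a)^2)) 1 ((q/a)/(1+(q/a)^2)) 1
        0 q a b a b b⁻¹ 0 0 (b⁻¹ ^ 2)
        (by simpa using mul_ne_zero (inv_ne_zero hb0) (pow_ne_zero 2 (inv_ne_zero hb0)))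
        ?_ ?_ ?_ ?_ ?_ ?_ ?_ ?_
      · ring
      · ring
      · rw [hA]; ring
      · linear_combination (-(b⁻¹ ^ 2)) * hbinv
      · rw [hA]; ring
      · linear_combination (-(b⁻¹ ^ 2)) * hbinv
      · ring
      · rw [hQ]; ring
  · -- noncommutative case
    have hR0 : (a + q) * (b - d) = 0 := by linear_combination E3b - E2b
    have haq : a + q = 0 := by
      rcases mul_eq_zero.mp hR0 with h | h
      · exact h
      · exact absurd (sub_eq_zero.mp h) hbd
    have hqa : a = q := by linear_combination haq - q * h2
    subst hqa
    have habd : a * (b * d) = 0 := by linear_combination -E1b - (a * b ^ 2) * h2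
    have hbd0 : b * d = 0 := by
      rcases mul_eq_zero.mp habd with h | h
      · exact absurd h ha
      · exact h
    rcases mul_eq_zero.mp hbd0 with hb | hd
    · -- b = 0, d ≠ 0, target A1
      have hd0 : d ≠ 0 := by intro h; exact hbd (by rw [hb, h])
      have hdinv : d * d⁻¹ = 1 := mul_inv_cancel₀ hd0
      obtain ⟨r, hr⟩ := hquad a 1 (d⁻¹ ^ 2 - a⁻¹) ha
      refine ⟨0, 1, 1, 0, 1, 1, Or.inl rfl, ?_⟩
      rw [hb]
      refine IsoS_symm (mkIso 0 1 1 0 1 1 0 a a 0 a d d⁻¹ r 0 a⁻¹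
        (by simpa using mul_ne_zero (inv_ne_zero hd0) (inv_ne_zero ha))
        ?_ ?_ ?_ ?_ ?_ ?_ ?_ ?_)
      · linear_combination (d⁻¹ * r * a) * h2
      · linear_combination hr + r * hdinv
      · linear_combination (-d⁻¹) * hainv
      · linear_combination (-r) * hainv
      · linear_combination (-d⁻¹) * hainv
      · linear_combination (-r) * hainv - a⁻¹ * hdinv
      · ring
      · linear_combination (-a⁻¹) * hainv
    · -- d = 0, b ≠ 0, target A3
      have hb0 : b ≠ 0 := by intro h; exact hbd (by rw [hd, h])
      have hbinv : b * b⁻¹ = 1 := mul_inv_cancel₀ hb0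
      obtain ⟨r, hr⟩ := hquad a 1 (b⁻¹ ^ 2 - a⁻¹) ha
      refine ⟨0, 1, 1, 1, 1, 0, Or.inr (Or.inr (Or.inl rfl)), ?_⟩
      rw [hd]
      refine IsoS_symm (mkIso 0 1 1 1 1 0 0 a a b a 0 b⁻¹ r 0 a⁻¹
        (by simpa using mul_ne_zero (inv_ne_zero hb0) (inv_ne_zero ha))
        ?_ ?_ ?_ ?_ ?_ ?_ ?_ ?_)
      · linear_combination (b⁻¹ * r * a) * h2
      · linear_combination hr + r * hbinv
      · linear_combination (-b⁻¹) * hainv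
      · linear_combination (-r) * hainv - a⁻¹ * hbinv
      · linear_combination (-b⁻¹) * hainv
      · linear_combination (-r) * hainv
      · ring
      · linear_combination (-a⁻¹) * hainv

lemma constraints {K : Type*} [Field K] [CharP K 2] (q a b d q' a' b' c' d' : K)
    (h : IsoS 0 q' a' b' c' d' 0 q a b a d) :
    ∃ x1 x2 m : K, x1 ≠ 0 ∧ m ≠ 0 ∧
      q' = m * q ∧ a' = m * a ∧ c' = m * a ∧
      b' = b * x1 + q * x2 + a * x2 ∧ d' = d * x1 + q * x2 + a * x2 := by
  obtain ⟨φ, hφ⟩ := h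
  have h2 : (2 : K) = 0 := by exact_mod_cast CharP.cast_eq_zero K 2
  set u : K × K := φ (1, 0) with hu
  set w : K × K := φ (0, 1) with hw
  -- w = mulS u u
  have hee := hφ (1, 0) (1, 0)
  have hee' : w = mulS 0 q a b a d u u := by
    have : mulS (0:K) q' a' b' c' d' (1, 0) (1, 0) = ((0:K), (1:K)) := by
      simp [mulS]
    rw [this] at hee
    exact hee
  have hw1 : w.1 = 0 := by
    rw [hee']
    show u.1 * u.2 * a + u.2 * u.1 * a + u.2 * u.2 * 0 = 0
    linear_combination (u.1 * u.2 * a) * h2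
  have hw2 : w.2 = u.1 * u.1 + u.1 * u.2 * b + u.2 * u.1 * d + u.2 * u.2 * q := by
    rw [hee']; rfl
  have hm : w.2 ≠ 0 := by
    intro h0
    have hwz : w = 0 := Prod.ext hw1 h0
    have : ((0:K), (1:K)) = (0 : K × K) := φ.injective (by rw [← hw, hwz, map_zero])
    simp [Prod.ext_iff] at this
  have hx1 : u.1 ≠ 0 := by
    intro h0
    have key : φ (w.2 • ((1:K), (0:K))) = φ (u.2 • ((0:K), (1:K))) := by
      rw [map_smul, map_smul, ← hu, ← hw]
      refine Prod.ext ?_ ?_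
      · show w.2 * u.1 = u.2 * w.1
        rw [h0, hw1]; ring
      · show w.2 * u.2 = u.2 * w.2
        ring
    have := φ.injective key
    simp [Prod.ext_iff] at this
    exact hm this.1
  -- f * f equation
  have hff := hφ (0, 1) (0, 1)
  have hffl : mulS (0:K) q' a' b' c' d' (0, 1) (0, 1) = q' • ((0:K), (1:K)) := by
    simp [mulS, Prod.ext_iff]
  rw [hffl, map_smul, ← hw] at hff
  have hffa := congrArg Prod.fst hff
  have hffb := congrArg Prod.snd hff
  simp only [mulS, Prod.smul_fst, Prod.smul_snd, smul_eq_mul] at hffa hffb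
  -- hffb : q' * w.2 = w.1 * w.1 + w.1 * w.2 * b + w.2 * w.1 * d + w.2 * w.2 * q
  have hq' : q' = w.2 * q := by
    have : q' * w.2 = (w.2 * q) * w.2 := by
      rw [hffb, hw1]; ring
    exact mul_right_cancel₀ hm this
  -- e * f equation
  have hef := hφ (1, 0) (0, 1)
  have hefl : mulS (0:K) q' a' b' c' d' (1, 0) (0, 1) =
      a' • ((1:K), (0:K)) + b' • ((0:K), (1:K)) := by
    simp [mulS, Prod.ext_iff]
  rw [hefl, map_add, map_smul, map_smul, ← hu, ← hw] at hef
  have hefa := congrArg Prod.fst hef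
  have hefb := congrArg Prod.snd hef
  simp only [mulS, Prod.fst_add, Prod.snd_add, Prod.smul_fst, Prod.smul_snd,
    smul_eq_mul] at hefa hefb
  -- hefa : a' * u.1 + b' * w.1 = u.1 * w.2 * a + u.2 * w.1 * a + u.2 * w.2 * 0
  have ha' : a' = w.2 * a := by
    have : a' * u.1 = (w.2 * a) * u.1 := by
      rw [hw1] at hefa
      linear_combination hefa
    exact mul_right_cancel₀ hx1 this
  have hb' : b' = b * u.1 + q * u.2 + a * u.2 := by
    have : b' * w.2 = (b * u.1 + q * u.2 + a * u.2) * w.2 := by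
      rw [hw1, ha'] at hefb
      linear_combination hefb - (a * u.2 * w.2) * h2
    exact mul_right_cancel₀ hm this
  -- f * e equation
  have hfe := hφ (0, 1) (1, 0)
  have hfel : mulS (0:K) q' a' b' c' d' (0, 1) (1, 0) =
      c' • ((1:K), (0:K)) + d' • ((0:K), (1:K)) := by
    simp [mulS, Prod.ext_iff]
  rw [hfel, map_add, map_smul, map_smul, ← hu, ← hw] at hfe
  have hfea := congrArg Prod.fst hfe
  have hfeb := congrArg Prod.snd hfe
  simp only [mulS, Prod.fst_add, Prod.snd_add, Prod.smul_fst, Prod.smul_snd,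
    smul_eq_mul] at hfea hfeb
  have hc' : c' = w.2 * a := by
    have : c' * u.1 = (w.2 * a) * u.1 := by
      rw [hw1] at hfea
      linear_combination hfea
    exact mul_right_cancel₀ hx1 this
  have hd' : d' = d * u.1 + q * u.2 + a * u.2 := by
    have : d' * w.2 = (d * u.1 + q * u.2 + a * u.2) * w.2 := by
      rw [hw1, hc'] at hfeb
      linear_combination hfeb - (a * u.2 * w.2) * h2
    exact mul_right_cancel₀ hm this
  exact ⟨u.1, u.2, w.2, hx1, hm, hq', ha', hc', hb', hd'⟩

lemma part2 [CharP K 2] :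
    ∀ p₁ q₁ a₁ b₁ c₁ d₁ p₂ q₂ a₂ b₂ c₂ d₂ : K,
        InListQNE p₁ q₁ a₁ b₁ c₁ d₁ → InListQNE p₂ q₂ a₂ b₂ c₂ d₂ →
        (p₁, q₁, a₁, b₁, c₁, d₁) ≠ (p₂, q₂, a₂, b₂, c₂, d₂) →
        ¬ IsoS p₁ q₁ a₁ b₁ c₁ d₁ p₂ q₂ a₂ b₂ c₂ d₂ := by
  have h2 : (2 : K) = 0 := by exact_mod_cast CharP.cast_eq_zero K 2
  intro p₁ q₁ a₁ b₁ c₁ d₁ p₂ q₂ a₂ b₂ c₂ d₂ h1 h2' hne hiso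
  rcases h1 with h1 | h1 | h1 | ⟨t₁, ht₁0, ht₁1, h1⟩ <;>
    [skip; skip; skip; skip] <;>
    rcases h2' with hB | hB | hB | ⟨t₂, ht₂0, ht₂1, hB⟩ <;>
      simp only [Prod.mk.injEq] at h1 hB <;>
      obtain ⟨rfl, rfl, rfl, rfl, rfl, rfl⟩ := h1 <;>
      obtain ⟨rfl, rfl, rfl, rfl, rfl, rfl⟩ := hB
  -- 1→1
  · exact hne rfl
  -- 1→2
  · obtain ⟨x1, x2, m, hx1, hm, Hq, Ha, Hc, Hb, Hd⟩ :=
      constraints 1 1 0 0 1 1 0 1 1 hiso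
    exact one_ne_zero (α := K) (by linear_combination Hd + x2 * h2)
  -- 1→3
  · obtain ⟨x1, x2, m, hx1, hm, Hq, Ha, Hc, Hb, Hd⟩ :=
      constraints 1 1 1 0 1 1 0 1 1 hiso
    exact hx1 (by linear_combination -Hb - x2 * h2)
  -- 1→F
  · obtain ⟨x1, x2, m, hx1, hm, Hq, Ha, Hc, Hb, Hd⟩ :=
      constraints (t₂^2/(1+t₂^2)) (t₂/(1+t₂^2)) 1 1 1 1 0 1 1 hiso
    exact one_ne_zero (α := K) (by linear_combination Hd - Hb)
  -- 2→1
  · obtain ⟨x1, x2, m, hx1, hm, Hq, Ha, Hc, Hb, Hd⟩ :=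
      constraints 1 1 0 1 1 1 0 1 0 hiso
    exact hx1 (by linear_combination -Hd - x2 * h2)
  -- 2→2
  · exact hne rfl
  -- 2→3
  · obtain ⟨x1, x2, m, hx1, hm, Hq, Ha, Hc, Hb, Hd⟩ :=
      constraints 1 1 1 0 1 1 0 1 0 hiso
    exact hx1 (by linear_combination -Hb - x2 * h2)
  -- 2→F
  · obtain ⟨x1, x2, m, hx1, hm, Hq, Ha, Hc, Hb, Hd⟩ :=
      constraints (t₂^2/(1+t₂^2)) (t₂/(1+t₂^2)) 1 1 1 1 0 1 0 hiso
    have hs := sne t₂ ht₂1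
    have key : m * t₂ * 1 = m * t₂ * t₂ := by
      have e1 : 1 + t₂ ^ 2 = m * t₂ := by
        field_simp at Ha
        linear_combination Ha
      have e2 : 1 + t₂ ^ 2 = m * t₂ ^ 2 := by
        field_simp at Hq
        linear_combination Hq
      linear_combination e2 - e1
    exact ht₂1 ((mul_left_cancel₀ (mul_ne_zero hm ht₂0) key).symm)
  -- 3→1
  · obtain ⟨x1, x2, m, hx1, hm, Hq, Ha, Hc, Hb, Hd⟩ :=
      constraints 1 1 0 1 1 1 1 1 0 hiso
    exact one_ne_zero (α := K) (by linear_combination Hb + x2 * h2)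
  -- 3→2
  · obtain ⟨x1, x2, m, hx1, hm, Hq, Ha, Hc, Hb, Hd⟩ :=
      constraints 1 1 0 0 1 1 1 1 0 hiso
    exact one_ne_zero (α := K) (by linear_combination Hb + x2 * h2)
  -- 3→3
  · exact hne rfl
  -- 3→F
  · obtain ⟨x1, x2, m, hx1, hm, Hq, Ha, Hc, Hb, Hd⟩ :=
      constraints (t₂^2/(1+t₂^2)) (t₂/(1+t₂^2)) 1 1 1 1 1 1 0 hiso
    exact one_ne_zero (α := K) (by linear_combination Hb - Hd)
  -- F→1
  · obtain ⟨x1, x2, m, hx1, hm, Hq, Ha, Hc, Hb, Hd⟩ :=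
      constraints 1 1 0 1 (t₁^2/(1+t₁^2)) (t₁/(1+t₁^2)) 1 (t₁/(1+t₁^2)) 1 hiso
    exact one_ne_zero (α := K) (by linear_combination Hb + x2 * h2)
  -- F→2
  · obtain ⟨x1, x2, m, hx1, hm, Hq, Ha, Hc, Hb, Hd⟩ :=
      constraints 1 1 0 0 (t₁^2/(1+t₁^2)) (t₁/(1+t₁^2)) 1 (t₁/(1+t₁^2)) 1 hiso
    exact one_ne_zero (α := K) (by linear_combination Hb + x2 * h2)
  -- F→3
  · obtain ⟨x1, x2, m, hx1, hm, Hq, Ha, Hc, Hb, Hd⟩ :=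
      constraints 1 1 1 0 (t₁^2/(1+t₁^2)) (t₁/(1+t₁^2)) 1 (t₁/(1+t₁^2)) 1 hiso
    exact one_ne_zero (α := K) (by linear_combination Hd + x2 * h2)
  -- F→F
  · obtain ⟨x1, x2, m, hx1, hm, Hq, Ha, Hc, Hb, Hd⟩ :=
      constraints (t₂^2/(1+t₂^2)) (t₂/(1+t₂^2)) 1 1 (t₁^2/(1+t₁^2)) (t₁/(1+t₁^2)) 1
        (t₁/(1+t₁^2)) 1 hiso
    have hs1 := sne t₁ ht₁1
    have hs2 := sne t₂ ht₂1
    have key : t₁ * t₂ = t₁ * t₁ := by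
      have e1 : t₁ * (1 + t₂ ^ 2) = m * t₂ * (1 + t₁ ^ 2) := by
        field_simp at Ha
        linear_combination Ha
      have e2 : t₁ ^ 2 * (1 + t₂ ^ 2) = m * t₂ ^ 2 * (1 + t₁ ^ 2) := by
        field_simp at Hq
        linear_combination Hq
      have e3 : t₁ * t₂ * (1 + t₂ ^ 2) = t₁ * t₁ * (1 + t₂ ^ 2) := by
        linear_combination t₂ * e1 - e2
      exact mul_right_cancel₀ hs2 e3
    have := mul_left_cancel₀ ht₁0 key
    exact hne (by rw [this])

end AuxClassification

theorem classification_II1_char_two_quad_nonextendable {K : Type*} [Field K]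
    [CharP K 2] (hquad : ∀ a b c : K, a ≠ 0 → ∃ x : K, a * x ^ 2 + b * x + c = 0) :
    (∀ q a b c d : K, a ≠ 0 → c ≠ 0 → EndoComm 0 q a b c d →
        ∃ p' q' a' b' c' d' : K, InListQNE p' q' a' b' c' d' ∧
          IsoS 0 q a b c d p' q' a' b' c' d') ∧
    (∀ p₁ q₁ a₁ b₁ c₁ d₁ p₂ q₂ a₂ b₂ c₂ d₂ : K,
        InListQNE p₁ q₁ a₁ b₁ c₁ d₁ → InListQNE p₂ q₂ a₂ b₂ c₂ d₂ →
        (p₁, q₁, a₁, b₁, c₁, d₁) ≠ (p₂, q₂, a₂, b₂, c₂, d₂) →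
        ¬ IsoS p₁ q₁ a₁ b₁ c₁ d₁ p₂ q₂ a₂ b₂ c₂ d₂) := by
  exact ⟨part1 hquad, part2⟩
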